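/- For any integers a ≤ y ≤ b and natural numbers m, n, the double sum ∑_{x₁=a}^{y} ∑_{x₂=y}^{b} [(x₁)_m (x₂+1)_n − (x₁)_n (x₂+1)_m] equals (1/((m+1)(n+1))) · [(a−1)_{n+1}(b+1)_{m+1} − (a−1)_{m+1}(b+1)_{n+1} − (a−1)_{n+1}(y)_{m+1} + (b+1)_{n+1}(y)_{m+1} + (a−1)_{m+1}(y)_{n+1} − (b+1)_{m+1}(y)_{n+1}], where (x)_m denotes the rising factorial x(x+1)⋯(x+m−1). -/
import Mathlib


/-- The rising factorial (Pochhammer symbol) `(x)_n = x(x+1)⋯(x+n-1)`. -/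
def poch (x : ℚ) (n : ℕ) : ℚ := ∏ i ∈ Finset.range n, (x + i)

lemma poch_succ (x : ℚ) (m : ℕ) : poch x (m+1) = poch x m * (x + m) := by
  simp [poch, Finset.prod_range_succ]

lemma poch_pred (x : ℚ) (m : ℕ) : poch (x - 1) (m+1) = (x - 1) * poch x m := by
  rw [poch, poch, Finset.prod_range_succ']
  simp only [Nat.cast_zero, add_zero]
  rw [mul_comm]
  congr 1
  apply Finset.prod_congr rfl
  intro i _
  push_cast
  ring

lemma poch_diff (x : ℚ) (m : ℕ) :
    poch x (m+1) - poch (x - 1) (m+1) = (m+1) * poch x m := by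
  rw [poch_succ, poch_pred]; ring

lemma sum_poch (a : ℤ) (m : ℕ) : ∀ y : ℤ, a ≤ y →
    ∑ x ∈ Finset.Icc a y, poch (x : ℚ) m
      = (poch (y : ℚ) (m+1) - poch ((a : ℚ) - 1) (m+1)) / (m+1) := by
  refine Int.le_induction ?_ ?_
  · rw [Finset.Icc_self, Finset.sum_singleton]
    have hm : ((m : ℚ) + 1) ≠ 0 := by positivity
    field_simp
    linarith [poch_diff (a : ℚ) m]
  · intro y hy ih
    rw [show Finset.Icc a (y+1) = insert (y+1) (Finset.Icc a y) by
      ext z; simp only [Finset.mem_insert, Finset.mem_Icc]; omega]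
    rw [Finset.sum_insert (by simp), ih]
    have h := poch_diff ((y : ℚ) + 1) m
    rw [show ((y : ℚ) + 1) - 1 = (y : ℚ) by ring] at h
    have hm : ((m : ℚ) + 1) ≠ 0 := by positivity
    push_cast
    field_simp
    linarith [h]

theorem stmt_2 (a b y : ℤ) (hay : a ≤ y) (hyb : y ≤ b) (m n : ℕ) :
    (∑ x₁ ∈ Finset.Icc a y, ∑ x₂ ∈ Finset.Icc y b,
      (poch (x₁ : ℚ) m * poch ((x₂ : ℚ) + 1) n - poch (x₁ : ℚ) n * poch ((x₂ : ℚ) + 1) m))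
    = (1 / ((m + 1) * (n + 1))) *
      (poch ((a : ℚ) - 1) (n + 1) * poch ((b : ℚ) + 1) (m + 1)
        - poch ((a : ℚ) - 1) (m + 1) * poch ((b : ℚ) + 1) (n + 1)
        - poch ((a : ℚ) - 1) (n + 1) * poch (y : ℚ) (m + 1)
        + poch ((b : ℚ) + 1) (n + 1) * poch (y : ℚ) (m + 1)
        + poch ((a : ℚ) - 1) (m + 1) * poch (y : ℚ) (n + 1)
        - poch ((b : ℚ) + 1) (m + 1) * poch (y : ℚ) (n + 1)) := by
  have hshift : ∀ k : ℕ, ∑ x₂ ∈ Finset.Icc y b, poch ((x₂ : ℚ) + 1) k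
      = (poch ((b : ℚ) + 1) (k+1) - poch (y : ℚ) (k+1)) / (k+1) := by
    intro k
    have := sum_poch (y+1) k (b+1) (by omega)
    rw [show Finset.Icc (y+1) (b+1) = Finset.map (addRightEmbedding 1) (Finset.Icc y b) by
      rw [Finset.map_add_right_Icc]] at this
    rw [Finset.sum_map] at this
    simp only [addRightEmbedding_apply] at this
    simp only [Function.Embedding.coeFn_mk, Int.cast_add, Int.cast_one] at this
    rw [this]
    congr 1
    ring_nf
  have key : ∀ x₁ ∈ Finset.Icc a y,
      ∑ x₂ ∈ Finset.Icc y b,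
        (poch (x₁ : ℚ) m * poch ((x₂ : ℚ) + 1) n - poch (x₁ : ℚ) n * poch ((x₂ : ℚ) + 1) m)
      = poch (x₁ : ℚ) m * ((poch ((b : ℚ) + 1) (n+1) - poch (y : ℚ) (n+1)) / (n+1))
        - poch (x₁ : ℚ) n * ((poch ((b : ℚ) + 1) (m+1) - poch (y : ℚ) (m+1)) / (m+1)) := by
    intro x₁ _
    rw [Finset.sum_sub_distrib, ← Finset.mul_sum, ← Finset.mul_sum, hshift, hshift]
  rw [Finset.sum_congr rfl key, Finset.sum_sub_distrib, ← Finset.sum_mul, ← Finset.sum_mul, sum_poch a m y hay, sum_poch a n y hay]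
  have hm : ((m : ℚ) + 1) ≠ 0 := by positivity
  have hn : ((n : ℚ) + 1) ≠ 0 := by positivity
  field_simp
  ring
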